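/- Let A be an n×n block upper triangular matrix over ℚ, with square diagonal blocks P (of size p×p, upper left) and Q (of size q×q, lower right), where p + q = n, and suppose P and Q are both diagonalizable over ℂ. Let g(x) be the (monic) greatest common divisor in ℚ[x] of the minimum polynomials of P and Q, and let N be the upper right p×q block of g(A). Then A is diagonalizable over ℂ if and only if for every vector v in the right nullspace of g(Q), the vector Nv belongs to the column space of g(P). -/

import Mathlib

open Polynomial

/-- `Ccyc k` is the `k × k` companion matrix of `x^k - 1`: the permutation matrix with `1`
in (1-based) positions `(i+1, i)` for `1 ≤ i ≤ k-1` and in position `(1, k)`. -/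
def Ccyc (k : ℕ) : Matrix (Fin k) (Fin k) ℚ :=
  Matrix.of fun r c => if (r : ℕ) = ((c : ℕ) + 1) % k then 1 else 0

/-- `Tblock n i1 j1 i2 j2` is the `n × n` matrix with entry `1` in (1-based) positions
`(i1, j1)` and `(i2, j2)`, entry `-1` in positions `(i1, j2)` and `(i2, j1)`, and `0`
elsewhere. -/
def Tblock (n i1 j1 i2 j2 : ℕ) : Matrix (Fin n) (Fin n) ℚ :=
  Matrix.of fun r c =>
    (if (r : ℕ) + 1 = i1 ∧ (c : ℕ) + 1 = j1 then (1 : ℚ) else 0)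
      + (if (r : ℕ) + 1 = i2 ∧ (c : ℕ) + 1 = j2 then (1 : ℚ) else 0)
      - (if (r : ℕ) + 1 = i1 ∧ (c : ℕ) + 1 = j2 then (1 : ℚ) else 0)
      - (if (r : ℕ) + 1 = i2 ∧ (c : ℕ) + 1 = j1 then (1 : ℚ) else 0)

/-- Matrix direct sum (block diagonal sum), realized on `Fin (p + q)`. -/
def dsum {p q : ℕ} (A : Matrix (Fin p) (Fin p) ℚ) (B : Matrix (Fin q) (Fin q) ℚ) :
    Matrix (Fin (p + q)) (Fin (p + q)) ℚ :=
  Matrix.reindex finSumFinEquiv finSumFinEquiv (Matrix.fromBlocks A 0 0 B)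

/-- A square rational matrix has finite multiplicative order if `A ^ t = 1` for some `t > 0`. -/
def HasFinOrder {n : ℕ} (A : Matrix (Fin n) (Fin n) ℚ) : Prop :=
  ∃ t : ℕ, 0 < t ∧ A ^ t = 1

/-- `OrderIs A t` : `t` is the least positive integer with `A ^ t = 1`. -/
def OrderIs {n : ℕ} (A : Matrix (Fin n) (Fin n) ℚ) (t : ℕ) : Prop :=
  IsLeast {s : ℕ | 0 < s ∧ A ^ s = 1} t

/-- Alternating sign matrix: entries in `{0, 1, -1}`, all partial row- and column-sums equal
`0` or `1`, and every full row and column sums to `1`. -/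
def IsASM {n : ℕ} (A : Matrix (Fin n) (Fin n) ℚ) : Prop :=
  (∀ i j : Fin n, A i j = 0 ∨ A i j = 1 ∨ A i j = -1) ∧
  (∀ i k : Fin n, (∑ j ∈ Finset.Iic k, A i j) = 0 ∨ (∑ j ∈ Finset.Iic k, A i j) = 1) ∧
  (∀ j k : Fin n, (∑ i ∈ Finset.Iic k, A i j) = 0 ∨ (∑ i ∈ Finset.Iic k, A i j) = 1) ∧
  (∀ i : Fin n, (∑ j, A i j) = 1) ∧
  (∀ j : Fin n, (∑ i, A i j) = 1)

/-- Permutation matrix. -/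
def IsPermMat {n : ℕ} (A : Matrix (Fin n) (Fin n) ℚ) : Prop :=
  ∃ σ : Equiv.Perm (Fin n), ∀ i j, A i j = if σ i = j then 1 else 0

/-- `A` is permutation similar to an alternating sign matrix:
`Pᵀ * A * P` is an ASM for some permutation matrix `P`. -/
def PermSimilarToASM {n : ℕ} (A : Matrix (Fin n) (Fin n) ℚ) : Prop :=
  ∃ P B : Matrix (Fin n) (Fin n) ℚ, IsPermMat P ∧ IsASM B ∧ B = P.transpose * A * P

/-- Similarity over `ℚ`. -/
def SimilarQ {n : ℕ} (A B : Matrix (Fin n) (Fin n) ℚ) : Prop :=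
  ∃ S : Matrix (Fin n) (Fin n) ℚ, IsUnit S ∧ B = S⁻¹ * A * S

/-- A `T`-block: a matrix of the form `± T(i1, j1, i2, j2)` with `i1 ≠ i2`, `j1 ≠ j2`. -/
def IsTBlock {n : ℕ} (M : Matrix (Fin n) (Fin n) ℚ) : Prop :=
  ∃ i1 j1 i2 j2 : ℕ, 1 ≤ i1 ∧ i1 ≤ n ∧ 1 ≤ j1 ∧ j1 ≤ n ∧ 1 ≤ i2 ∧ i2 ≤ n ∧ 1 ≤ j2 ∧ j2 ≤ n ∧
    i1 ≠ i2 ∧ j1 ≠ j2 ∧ (M = Tblock n i1 j1 i2 j2 ∨ M = -Tblock n i1 j1 i2 j2)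

/-- A square rational matrix is diagonalizable over `ℂ`. -/
def DiagC {m : Type*} [Fintype m] [DecidableEq m] (A : Matrix m m ℚ) : Prop :=
  ∃ (S : Matrix m m ℂ) (d : m → ℂ),
    IsUnit S ∧ A.map (algebraMap ℚ ℂ) = S * Matrix.diagonal d * S⁻¹

section Helper
variable {m : Type*} [Fintype m] [DecidableEq m]

lemma myConjPow (S B : Matrix m m ℂ) (hS : IsUnit S) (k : ℕ) :
    (S * B * S⁻¹) ^ k = S * B ^ k * S⁻¹ := by
  have hdet : IsUnit S.det := (Matrix.isUnit_iff_isUnit_det S).mp hS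
  induction k with
  | zero => simp [Matrix.mul_nonsing_inv S hdet]
  | succ k ih =>
      rw [pow_succ, pow_succ, ih]
      simp only [Matrix.mul_assoc]
      rw [Matrix.nonsing_inv_mul_cancel_left S _ hdet]

lemma myAevalConj (S B : Matrix m m ℂ) (hS : IsUnit S) (r : ℂ[X]) :
    aeval (S * B * S⁻¹) r = S * aeval B r * S⁻¹ := by
  induction r using Polynomial.induction_on' with
  | add f g hf hg => rw [map_add, map_add, hf, hg, Matrix.mul_add, Matrix.add_mul]
  | monomial k c =>
      rw [aeval_monomial, aeval_monomial, myConjPow S B hS, Algebra.algebraMap_eq_smul_one]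
      rw [smul_mul_assoc, one_mul, smul_mul_assoc, one_mul, Matrix.mul_smul, Matrix.smul_mul]

noncomputable def diagA (m : Type*) [Fintype m] [DecidableEq m] :
    (m → ℂ) →ₐ[ℂ] Matrix m m ℂ :=
  { Matrix.diagonalRingHom m ℂ with
    commutes' := fun c => by
      simp only [Matrix.diagonalRingHom, RingHom.coe_mk, MonoidHom.coe_mk, OneHom.coe_mk,
        Matrix.algebraMap_eq_diagonal] }

lemma myAevalDiag (d : m → ℂ) (f : ℂ[X]) :
    aeval (Matrix.diagonal d) f = Matrix.diagonal (fun i => eval (d i) f) := by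
  have h1 : Matrix.diagonal d = diagA m d := rfl
  rw [h1, aeval_algHom_apply (diagA m) d f]
  have h2 : aeval d f = fun i => eval (d i) f := by
    funext i
    have h3 := aeval_algHom_apply (Pi.evalAlgHom ℂ (fun _ => ℂ) i) d f
    simp only [Pi.evalAlgHom_apply] at h3
    rw [← h3, aeval_def, eval₂_eq_eval_map]
    simp
  rw [h2]
  rfl

lemma myAevalDiagProd (d : m → ℂ) :
    aeval (Matrix.diagonal d) (∏ c ∈ Finset.image d Finset.univ, (X - C c)) = 0 := by
  rw [myAevalDiag]
  have : (fun i => eval (d i) (∏ c ∈ Finset.image d Finset.univ, (X - C c))) = (0 : m → ℂ) := by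
    funext i
    rw [eval_prod]
    exact Finset.prod_eq_zero (Finset.mem_image_of_mem d (Finset.mem_univ i)) (by simp)
  rw [this]
  exact Matrix.diagonal_zero

end Helper

section Dir1
variable {m : Type*} [Fintype m] [DecidableEq m]

lemma myKey (A : Matrix m m ℚ) (r : ℚ[X]) :
    aeval A r = 0 ↔ aeval (A.map (algebraMap ℚ ℂ)) (r.map (algebraMap ℚ ℂ)) = 0 := by
  have hphi : (Algebra.ofId ℚ ℂ).mapMatrix A = A.map (algebraMap ℚ ℂ) := rfl
  rw [aeval_map_algebraMap, ← hphi, aeval_algHom_apply]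
  constructor
  · intro h; rw [h, map_zero]
  · intro h
    have hinj : Function.Injective ((Algebra.ofId ℚ ℂ).mapMatrix :
        Matrix m m ℚ →ₐ[ℚ] Matrix m m ℂ) := by
      intro x y hxy
      exact Matrix.map_injective (algebraMap ℚ ℂ).injective hxy
    exact hinj (by rw [h, map_zero])

lemma squarefree_of_diagC {A : Matrix m m ℚ} (h : DiagC A) : Squarefree (minpoly ℚ A) := by
  obtain ⟨S, d, hS, hconj⟩ := h
  have hfq_sf : Squarefree (∏ c ∈ Finset.image d Finset.univ, (X - C c)) :=
    PerfectField.separable_iff_squarefree.mp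
      (separable_prod_X_sub_C_iff'.mpr (fun x _ y _ hxy => hxy))
  have hfq0 : aeval (A.map (algebraMap ℚ ℂ)) (∏ c ∈ Finset.image d Finset.univ, (X - C c)) = 0 := by
    rw [hconj, myAevalConj S _ hS, myAevalDiagProd, Matrix.mul_zero, Matrix.zero_mul]
  have hmc_sf : Squarefree (minpoly ℂ (A.map (algebraMap ℚ ℂ))) :=
    hfq_sf.squarefree_of_dvd (minpoly.dvd ℂ (A.map (algebraMap ℚ ℂ)) hfq0)
  have hint : IsIntegral ℚ A := Matrix.isIntegral A
  have hm0 : minpoly ℚ A ≠ 0 := minpoly.ne_zero hint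
  rintro x ⟨t, ht⟩
  by_contra hxu
  have hx0 : x ≠ 0 := by rintro rfl; rw [ht] at hm0; simp at hm0
  have ht0 : t ≠ 0 := by rintro rfl; rw [ht] at hm0; simp at hm0
  -- minpoly ℂ (A.map (algebraMap ℚ ℂ)) divides (x*t).map
  have hdvd1 : minpoly ℂ (A.map (algebraMap ℚ ℂ)) ∣ ((x * t).map (algebraMap ℚ ℂ)) := by
    apply hmc_sf.isRadical 2
    have h1 : minpoly ℂ (A.map (algebraMap ℚ ℂ)) ∣ (minpoly ℚ A).map (algebraMap ℚ ℂ) :=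
      minpoly.dvd ℂ (A.map (algebraMap ℚ ℂ)) ((myKey A (minpoly ℚ A)).mp (minpoly.aeval ℚ A))
    refine h1.trans ?_
    rw [← Polynomial.map_pow]
    apply Polynomial.map_dvd
    exact ⟨t, by rw [ht]; ring⟩
  have h2 : aeval (A.map (algebraMap ℚ ℂ)) ((x * t).map (algebraMap ℚ ℂ)) = 0 := by
    obtain ⟨c, hc⟩ := hdvd1
    rw [hc, _root_.map_mul, minpoly.aeval, zero_mul]
  have h3 : minpoly ℚ A ∣ x * t := minpoly.dvd ℚ A ((myKey A (x * t)).mpr h2)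
  obtain ⟨c, hc⟩ := h3
  rw [ht] at hc
  have hxt : x * t ≠ 0 := mul_ne_zero hx0 ht0
  have : x * t * 1 = x * t * (x * c) := by
    rw [mul_one]
    conv_lhs => rw [hc]
    ring
  exact hxu (IsUnit.of_mul_eq_one c (mul_left_cancel₀ hxt this).symm)

end Dir1

section Dir2
variable {m : Type*} [Fintype m] [DecidableEq m]

lemma diagC_of_squarefree' {A : Matrix m m ℚ} (h : Squarefree (minpoly ℚ A)) :
    ∃ (S : Matrix m m ℂ) (d : m → ℂ),
      IsUnit S ∧ A.map (algebraMap ℚ ℂ) = S * Matrix.diagonal d * S⁻¹ := by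
  have hpm_sf : Squarefree ((minpoly ℚ A).map (algebraMap ℚ ℂ)) :=
    PerfectField.separable_iff_squarefree.mp
      ((PerfectField.separable_iff_squarefree.mpr h).map)
  set Ac := A.map (algebraMap ℚ ℂ) with hAc
  set fendo : Module.End ℂ (m → ℂ) := Matrix.toLinAlgEquiv' Ac with hfendo
  have hAc0 : aeval Ac ((minpoly ℚ A).map (algebraMap ℚ ℂ)) = 0 := by
    rw [aeval_map_algebraMap]
    have hphi : (Algebra.ofId ℚ ℂ).mapMatrix A = Ac := rfl
    rw [← hphi, aeval_algHom_apply, minpoly.aeval, map_zero]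
  have h0 : aeval fendo ((minpoly ℚ A).map (algebraMap ℚ ℂ)) = 0 := by
    rw [hfendo, aeval_algHom_apply, hAc0, map_zero]
  have hss := Module.End.isSemisimple_of_squarefree_aeval_eq_zero hpm_sf h0
  have htop : ⨆ μ : ℂ, fendo.eigenspace μ = ⊤ := by
    have h1 := Module.End.iSup_maxGenEigenspace_eq_top fendo
    have h2 := hss.isFinitelySemisimple.maxGenEigenspace_eq_eigenspace
    simp_rw [h2] at h1
    exact h1
  have hint : DirectSum.IsInternal fendo.eigenspace :=
    DirectSum.isInternal_submodule_of_iSupIndep_of_iSup_eq_top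
      fendo.eigenspaces_iSupIndep htop
  let bb := hint.collectedBasis (fun μ => Module.Basis.ofVectorSpace ℂ (fendo.eigenspace μ))
  haveI : Fintype ((μ : ℂ) × Module.Basis.ofVectorSpaceIndex ℂ (fendo.eigenspace μ)) :=
    FiniteDimensional.fintypeBasisIndex bb
  let e := bb.indexEquiv (Pi.basisFun ℂ m)
  let b' : Module.Basis m ℂ (m → ℂ) := bb.reindex e
  let d : m → ℂ := fun j => (e.symm j).1
  have heig : ∀ j, fendo (b' j) = d j • b' j := by
    intro j
    have hmem := hint.collectedBasis_mem
      (fun μ => Module.Basis.ofVectorSpace ℂ (fendo.eigenspace μ)) (e.symm j)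
    rw [Module.Basis.reindex_apply]
    exact Module.End.mem_eigenspace_iff.mp hmem
  have hdiag : LinearMap.toMatrix b' b' fendo = Matrix.diagonal d := by
    ext i j
    rw [LinearMap.toMatrix_apply, heig j, _root_.map_smul, Module.Basis.repr_self]
    simp only [Finsupp.smul_single, smul_eq_mul, mul_one, Finsupp.single_apply,
      Matrix.diagonal_apply]
    by_cases hij : i = j
    · subst hij; simp
    · simp [hij, Ne.symm hij]
  let pb := Pi.basisFun ℂ m
  haveI := pb.invertibleToMatrix b'
  refine ⟨pb.toMatrix b', d, isUnit_of_invertible _, ?_⟩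
  have hmain := basis_toMatrix_mul_linearMap_toMatrix_mul_basis_toMatrix pb b' pb b' fendo
  have hApb : LinearMap.toMatrix pb pb fendo = Ac := by
    have h1 : fendo = Matrix.toLin' Ac := by
      apply LinearMap.ext; intro v
      rw [hfendo, Matrix.toLinAlgEquiv'_apply, Matrix.toLin'_apply]
    rw [h1, LinearMap.toMatrix_eq_toMatrix', LinearMap.toMatrix'_toLin']
  have hinv : (pb.toMatrix b')⁻¹ = b'.toMatrix pb :=
    Matrix.inv_eq_right_inv (by rw [Module.Basis.toMatrix_mul_toMatrix_flip])
  rw [hinv, ← hdiag, hmain, hApb]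
end Dir2

lemma myPowBlocks {p q : ℕ} (P : Matrix (Fin p) (Fin p) ℚ) (M : Matrix (Fin p) (Fin q) ℚ)
    (Q : Matrix (Fin q) (Fin q) ℚ) (k : ℕ) :
    ∃ Y, (Matrix.fromBlocks P M 0 Q) ^ k = Matrix.fromBlocks (P ^ k) Y 0 (Q ^ k) := by
  induction k with
  | zero => exact ⟨0, by rw [pow_zero, pow_zero, pow_zero, ← Matrix.fromBlocks_one]⟩
  | succ k ih =>
      obtain ⟨Y, hY⟩ := ih
      refine ⟨P ^ k * M + Y * Q, ?_⟩
      rw [pow_succ, pow_succ, pow_succ, hY, Matrix.fromBlocks_multiply]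
      congr 1 <;> simp

lemma myAevalBlocks {p q : ℕ} (P : Matrix (Fin p) (Fin p) ℚ) (M : Matrix (Fin p) (Fin q) ℚ)
    (Q : Matrix (Fin q) (Fin q) ℚ) (r : ℚ[X]) :
    ∃ Y, aeval (Matrix.fromBlocks P M 0 Q) r
      = Matrix.fromBlocks (aeval P r) Y 0 (aeval Q r) := by
  induction r using Polynomial.induction_on' with
  | add f g hf hg =>
      obtain ⟨Y1, h1⟩ := hf
      obtain ⟨Y2, h2⟩ := hg
      refine ⟨Y1 + Y2, ?_⟩
      rw [map_add, map_add, map_add, h1, h2, Matrix.fromBlocks_add]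
      congr 1 <;> simp
  | monomial k c =>
      obtain ⟨Y, hY⟩ := myPowBlocks P M Q k
      refine ⟨c • Y, ?_⟩
      rw [aeval_monomial, aeval_monomial, aeval_monomial, hY,
        Algebra.algebraMap_eq_smul_one, Algebra.algebraMap_eq_smul_one,
        Algebra.algebraMap_eq_smul_one, smul_mul_assoc, one_mul, smul_mul_assoc, one_mul,
        smul_mul_assoc, one_mul, Matrix.fromBlocks_smul]
      congr 1
      simp

theorem stmt9 (p q : ℕ) (P : Matrix (Fin p) (Fin p) ℚ) (Q : Matrix (Fin q) (Fin q) ℚ)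
    (M : Matrix (Fin p) (Fin q) ℚ) (hP : DiagC P) (hQ : DiagC Q)
    (A : Matrix (Fin p ⊕ Fin q) (Fin p ⊕ Fin q) ℚ) (hA : A = Matrix.fromBlocks P M 0 Q)
    (g : Polynomial ℚ) (hg : g = gcd (minpoly ℚ P) (minpoly ℚ Q))
    (N : Matrix (Fin p) (Fin q) ℚ) (hN : N = (Polynomial.aeval A g).toBlocks₁₂) :
    DiagC A ↔
      ∀ v : Fin q → ℚ, (Polynomial.aeval Q g).mulVec v = 0 →
        ∃ u : Fin p → ℚ, (Polynomial.aeval P g).mulVec u = N.mulVec v := by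
  subst hA
  have hfsf : Squarefree (minpoly ℚ P) := squarefree_of_diagC hP
  have hhsf : Squarefree (minpoly ℚ Q) := squarefree_of_diagC hQ
  obtain ⟨f₁, hf₁⟩ : ∃ f₁, minpoly ℚ P = g * f₁ := by
    rw [hg]; exact gcd_dvd_left (minpoly ℚ P) (minpoly ℚ Q)
  obtain ⟨h₁, hh₁⟩ : ∃ h₁, minpoly ℚ Q = g * h₁ := by
    rw [hg]; exact gcd_dvd_right (minpoly ℚ P) (minpoly ℚ Q)
  have hgf : g ∣ minpoly ℚ P := ⟨f₁, hf₁⟩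
  have hgh : g ∣ minpoly ℚ Q := ⟨h₁, hh₁⟩
  have hf₁f : f₁ ∣ minpoly ℚ P := ⟨g, by rw [hf₁]; ring⟩
  have hh₁h : h₁ ∣ minpoly ℚ Q := ⟨g, by rw [hh₁]; ring⟩
  have hcop1 : IsCoprime g h₁ := by
    rw [← gcd_isUnit_iff]
    exact hhsf _ (by rw [hh₁]; exact mul_dvd_mul (gcd_dvd_left g h₁) (gcd_dvd_right g h₁))
  have hcop2 : IsCoprime g f₁ := by
    rw [← gcd_isUnit_iff]
    exact hfsf _ (by rw [hf₁]; exact mul_dvd_mul (gcd_dvd_left g f₁) (gcd_dvd_right g f₁))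
  have hcop3 : IsCoprime f₁ h₁ := by
    rw [← gcd_isUnit_iff]
    have hdg : gcd f₁ h₁ ∣ g := by
      rw [hg]
      exact dvd_gcd ((gcd_dvd_left f₁ h₁).trans hf₁f) ((gcd_dvd_right f₁ h₁).trans hh₁h)
    exact hfsf _ (by rw [hf₁]; exact mul_dvd_mul hdg (gcd_dvd_left f₁ h₁))
  obtain ⟨Yg, hYg⟩ := myAevalBlocks P M Q g
  obtain ⟨Yf1, hYf1⟩ := myAevalBlocks P M Q f₁
  obtain ⟨Yh1, hYh1⟩ := myAevalBlocks P M Q h₁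
  have hNg : N = Yg := by rw [hN, hYg, Matrix.toBlocks_fromBlocks₁₂]
  have hQh : aeval Q g * aeval Q h₁ = 0 := by
    rw [← map_mul, ← hh₁, minpoly.aeval]
  have hPf : aeval P f₁ * aeval P g = 0 := by
    rw [← map_mul, mul_comm f₁ g, ← hf₁, minpoly.aeval]
  have hgh1 : aeval (Matrix.fromBlocks P M 0 Q) (g * h₁)
      = Matrix.fromBlocks (aeval P g * aeval P h₁)
          (aeval P g * Yh1 + Yg * aeval Q h₁) 0 0 := by
    rw [map_mul, hYg, hYh1, Matrix.fromBlocks_multiply]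
    congr 1 <;> simp [hQh]
  have hLA : aeval (Matrix.fromBlocks P M 0 Q) (f₁ * (g * h₁))
      = Matrix.fromBlocks 0 (aeval P f₁ * (N * aeval Q h₁)) 0 0 := by
    rw [map_mul, hYf1, hgh1, Matrix.fromBlocks_multiply]
    rw [show (aeval P f₁) * ((aeval P g) * (aeval P h₁)) = 0 by
      rw [← Matrix.mul_assoc, hPf, Matrix.zero_mul]]
    rw [show (aeval P f₁) * ((aeval P g) * Yh1 + Yg * (aeval Q h₁))
        = aeval P f₁ * (N * aeval Q h₁) by
      rw [hNg, Matrix.mul_add, ← Matrix.mul_assoc, hPf, Matrix.zero_mul, zero_add]]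
    simp
  constructor
  · intro hDiag v hv
    have hmsf := squarefree_of_diagC hDiag
    have hL0 : aeval (Matrix.fromBlocks P M 0 Q) (f₁ * (g * h₁)) = 0 := by
      have hfh0 : aeval (Matrix.fromBlocks P M 0 Q) (minpoly ℚ P * minpoly ℚ Q) = 0 := by
        obtain ⟨Yf, hYf⟩ := myAevalBlocks P M Q (minpoly ℚ P)
        obtain ⟨Yh, hYh⟩ := myAevalBlocks P M Q (minpoly ℚ Q)
        rw [map_mul, hYf, hYh, Matrix.fromBlocks_multiply, minpoly.aeval, minpoly.aeval]
        simp
      have h1 : minpoly ℚ (Matrix.fromBlocks P M 0 Q) ∣ minpoly ℚ P * minpoly ℚ Q :=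
        minpoly.dvd ℚ _ hfh0
      have h2 : minpoly ℚ P * minpoly ℚ Q = f₁ * (g * h₁) * g := by
        rw [hf₁, hh₁]; ring
      have h3 : minpoly ℚ (Matrix.fromBlocks P M 0 Q) ∣ f₁ * (g * h₁) := by
        apply hmsf.isRadical 2
        rw [h2] at h1
        refine h1.trans ?_
        rw [sq]
        exact mul_dvd_mul_left _ ⟨f₁ * h₁, by ring⟩
      obtain ⟨c, hc⟩ := h3
      rw [hc, map_mul, minpoly.aeval, zero_mul]
    have hK : (aeval P f₁ * (N * aeval Q h₁) : Matrix (Fin p) (Fin q) ℚ) = 0 := by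
      have h4 := hLA.symm.trans hL0
      have h5 := congrArg Matrix.toBlocks₁₂ h4
      simp at h5
      exact h5.trans (Matrix.ext fun _ _ => rfl)
    obtain ⟨a, b, hab⟩ := hcop1
    have hab' : a * g + h₁ * b = 1 := by rw [← hab]; ring
    have hv' : v = (aeval Q h₁).mulVec ((aeval Q b).mulVec v) := by
      have h6 := congrArg (aeval Q) hab'
      rw [map_add, map_mul, map_mul, map_one] at h6
      calc v = Matrix.mulVec 1 v := by rw [Matrix.one_mulVec]
        _ = (aeval Q a * aeval Q g + aeval Q h₁ * aeval Q b).mulVec v := by rw [h6]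
        _ = (aeval Q a).mulVec ((aeval Q g).mulVec v)
              + (aeval Q h₁).mulVec ((aeval Q b).mulVec v) := by
            rw [Matrix.add_mulVec, Matrix.mulVec_mulVec, Matrix.mulVec_mulVec]
        _ = (aeval Q h₁).mulVec ((aeval Q b).mulVec v) := by
            rw [hv, Matrix.mulVec_zero, zero_add]
    obtain ⟨c, d', hcd⟩ := hcop2
    have hcd' : g * c + d' * f₁ = 1 := by rw [← hcd]; ring
    have h7 : aeval P g * aeval P c + aeval P d' * aeval P f₁ = 1 := by
      have h7a := congrArg (aeval P) hcd'
      rwa [map_add, map_mul, map_mul, map_one] at h7a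
    have h8 : (aeval P f₁).mulVec (N.mulVec v) = 0 := by
      conv_lhs => rw [hv']
      simp only [Matrix.mulVec_mulVec, ← Matrix.mul_assoc]
      rw [show aeval P f₁ * N * aeval Q h₁ = 0 by rw [Matrix.mul_assoc]; exact hK]
      simp
    refine ⟨(aeval P c).mulVec (N.mulVec v), ?_⟩
    calc (aeval P g).mulVec ((aeval P c).mulVec (N.mulVec v))
        = (aeval P g * aeval P c).mulVec (N.mulVec v) := by rw [Matrix.mulVec_mulVec]
      _ = ((1 : Matrix (Fin p) (Fin p) ℚ) - aeval P d' * aeval P f₁).mulVec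
            (N.mulVec v) := by rw [eq_sub_of_add_eq h7]
      _ = N.mulVec v := by
          rw [Matrix.sub_mulVec, ← Matrix.mulVec_mulVec, h8, Matrix.mulVec_zero, sub_zero,
            Matrix.one_mulVec]
  · intro hcond
    have hK : (aeval P f₁ * (N * aeval Q h₁) : Matrix (Fin p) (Fin q) ℚ) = 0 := by
      have hcol : ∀ w : Fin q → ℚ, (aeval P f₁ * (N * aeval Q h₁)).mulVec w = 0 := by
        intro w
        obtain ⟨u, hu⟩ := hcond ((aeval Q h₁).mulVec w) (by
          rw [Matrix.mulVec_mulVec, hQh, Matrix.zero_mulVec])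
        have h9 : (aeval P f₁ * (N * aeval Q h₁)).mulVec w
            = (aeval P f₁).mulVec (N.mulVec ((aeval Q h₁).mulVec w)) := by
          simp only [Matrix.mulVec_mulVec, Matrix.mul_assoc]
        rw [h9, ← hu, Matrix.mulVec_mulVec, hPf, Matrix.zero_mulVec]
      ext i j
      have h10 := congrFun (hcol (Pi.single j 1)) i
      simpa [Matrix.mulVec_single] using h10
    have hL0 : aeval (Matrix.fromBlocks P M 0 Q) (f₁ * (g * h₁)) = 0 := by
      rw [hLA, hK]
      simp
    have hmdvd : minpoly ℚ (Matrix.fromBlocks P M 0 Q) ∣ f₁ * (g * h₁) :=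
      minpoly.dvd ℚ _ hL0
    have hsfL : Squarefree (f₁ * (g * h₁)) := by
      rw [squarefree_mul_iff]
      refine ⟨(hcop2.symm.mul_right hcop3).isRelPrime, hfsf.squarefree_of_dvd hf₁f, ?_⟩
      rw [squarefree_mul_iff]
      exact ⟨hcop1.isRelPrime, hfsf.squarefree_of_dvd hgf, hhsf.squarefree_of_dvd hh₁h⟩
    exact diagC_of_squarefree' (hsfL.squarefree_of_dvd hmdvd)
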